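/- There is an absolute constant C > 0 with the following property. Let k ≥ 2 be an integer, t a real number, and set T := 1 + |t|. Then for every real x with x > eT/k and for each choice of sign ±, one has |I_±(t,k,x)| ≤ C · e^{−πT/2} · (x/T)^{1/2} · (eT/(xk))^{k}. -/

import Mathlib

open Complex

/-- `e(z) = exp(2πiz)`. -/
noncomputable def eC (z : ℂ) : ℂ := Complex.exp (2 * Real.pi * Complex.I * z)

/-- The function `I_ε(t,k,x)` for a sign `ε = ±1`:
`e(ε(1/2−k)/4) x^{1/2−k} Σ_j Γ(k+j−it)/(Γ(2k+j) j!) (−e(−ε/4)/x)^j`. -/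
noncomputable def Ipm (ε : ℝ) (t : ℝ) (k : ℕ) (x : ℝ) : ℂ :=
  eC ((ε : ℂ) * ((1 : ℂ) / 2 - (k : ℂ)) / 4) * (x : ℂ) ^ ((1 : ℂ) / 2 - (k : ℂ)) *
    ∑' j : ℕ, Complex.Gamma ((k : ℂ) + (j : ℂ) - (t : ℂ) * Complex.I) /
      (Complex.Gamma (2 * (k : ℂ) + (j : ℂ)) * (Nat.factorial j : ℂ)) *
      (-(eC (-(ε : ℂ) / 4)) / (x : ℂ)) ^ j

lemma norm_eC_real (r : ℝ) : ‖eC (r : ℂ)‖ = 1 := by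
  rw [eC, Complex.norm_exp]
  have : (2 * ↑Real.pi * I * (r:ℂ)).re = 0 := by simp [Complex.ext_iff]
  rw [this, Real.exp_zero]

lemma real_exp_tsum (r : ℝ) : ∑' n : ℕ, r ^ n / n.factorial = Real.exp r := by
  rw [Real.exp_eq_exp_ℝ, NormedSpace.exp_eq_tsum_div]

lemma key_ineq (s : ℝ) (hs : 0 < s) :
    Real.pi * s / Real.sinh (Real.pi * s) ≤
      Real.exp Real.pi * (1 + s) * Real.exp (-(Real.pi * s)) := by
  have hpi := Real.pi_gt_three
  have hsinh : Real.pi * s < Real.sinh (Real.pi * s) :=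
    Real.self_lt_sinh_iff.mpr (by positivity)
  have hsinhpos : 0 < Real.sinh (Real.pi * s) := lt_trans (by positivity) hsinh
  rcases le_total s 1 with h1 | h1
  · have l1 : Real.pi * s / Real.sinh (Real.pi * s) ≤ 1 :=
      (div_le_one hsinhpos).mpr hsinh.le
    refine l1.trans ?_
    have : Real.exp Real.pi * Real.exp (-(Real.pi * s)) = Real.exp (Real.pi - Real.pi * s) := by
      rw [← Real.exp_add]; ring_nf
    calc (1:ℝ) = Real.exp 0 := by rw [Real.exp_zero]
      _ ≤ Real.exp (Real.pi - Real.pi * s) := by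
          apply Real.exp_le_exp.mpr; nlinarith
      _ ≤ Real.exp Real.pi * (1 + s) * Real.exp (-(Real.pi * s)) := by
          rw [mul_comm (Real.exp Real.pi) (1+s), mul_assoc, this]
          nlinarith [Real.exp_pos (Real.pi - Real.pi * s)]
  · -- s ≥ 1 case: sinh(πs) ≥ exp(πs)/4
    have h2 : (2:ℝ) ≤ Real.exp (Real.pi * s) := by
      calc (2:ℝ) ≤ 1 + Real.pi * s := by nlinarith
        _ ≤ Real.exp (Real.pi * s) := by linarith [Real.add_one_le_exp (Real.pi*s)]
    have hsinh2 : Real.exp (Real.pi * s) / 4 ≤ Real.sinh (Real.pi * s) := by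
      rw [Real.sinh_eq]
      have : Real.exp (-(Real.pi * s)) ≤ 1 := Real.exp_le_one_iff.mpr (by nlinarith)
      nlinarith
    have hE : 4 * Real.pi ≤ Real.exp Real.pi := by
      have : Real.exp 3 ≤ Real.exp Real.pi := Real.exp_le_exp.mpr hpi.le
      have h3 : (2.7182818283:ℝ)^3 ≤ Real.exp 3 := by
        have := Real.exp_one_gt_d9
        calc (2.7182818283:ℝ)^3 ≤ (Real.exp 1)^3 := by gcongr <;> nlinarith [Real.exp_pos 1]
          _ = Real.exp 3 := by rw [← Real.exp_nat_mul]; norm_num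
      nlinarith [Real.pi_lt_d2]
    calc Real.pi * s / Real.sinh (Real.pi * s)
        ≤ Real.pi * s / (Real.exp (Real.pi * s) / 4) := by
          apply div_le_div_of_nonneg_left (by positivity) (by positivity) hsinh2
      _ = 4 * Real.pi * s * Real.exp (-(Real.pi * s)) := by
          rw [Real.exp_neg]; field_simp
      _ ≤ Real.exp Real.pi * (1 + s) * Real.exp (-(Real.pi * s)) := by
          have : 4 * Real.pi * s ≤ Real.exp Real.pi * (1 + s) := by
            nlinarith [Real.exp_pos Real.pi]
          nlinarith [Real.exp_pos (-(Real.pi * s))]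



-- |Γ(1-ti)|^2 = πt/sinh(πt) for t > 0
lemma normSq_Gamma (t : ℝ) (ht : 0 < t) :
    Complex.normSq (Complex.Gamma (1 - (t:ℂ) * I)) =
      Real.pi * t / Real.sinh (Real.pi * t) := by
  have hconj : (starRingEnd ℂ) (1 - (t:ℂ) * I) = 1 + (t:ℂ) * I := by
    simp [Complex.ext_iff]
  have h1 : (Complex.normSq (Complex.Gamma (1 - (t:ℂ) * I)) : ℂ) =
      Complex.Gamma (1 - (t:ℂ) * I) * Complex.Gamma (1 + (t:ℂ) * I) := by
    rw [← Complex.mul_conj, ← Complex.Gamma_conj, hconj]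
  have hne : (t:ℂ) * I ≠ 0 := by
    simp [Complex.ext_iff, ht.ne']
  have h2 : Complex.Gamma (1 + (t:ℂ) * I) = (t:ℂ) * I * Complex.Gamma ((t:ℂ) * I) := by
    have := Complex.Gamma_add_one ((t:ℂ) * I) hne
    rw [add_comm] at this
    exact this
  have h3 : Complex.Gamma ((t:ℂ)*I) * Complex.Gamma (1 - (t:ℂ)*I) =
      (Real.pi : ℂ) / Complex.sin ((Real.pi : ℂ) * ((t:ℂ)*I)) :=
    Complex.Gamma_mul_Gamma_one_sub _
  have hsin : Complex.sin ((Real.pi : ℂ) * ((t:ℂ)*I)) = (Real.sinh (Real.pi * t) : ℂ) * I := by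
    rw [← mul_assoc, ← Complex.ofReal_mul, Complex.sin_mul_I, Complex.ofReal_sinh]
  have hsinh_pos : 0 < Real.sinh (Real.pi * t) := Real.sinh_pos_iff.mpr (by positivity)
  have : (Complex.normSq (Complex.Gamma (1 - (t:ℂ) * I)) : ℂ) =
      ((Real.pi * t / Real.sinh (Real.pi * t) : ℝ) : ℂ) := by
    rw [h1, h2, show Complex.Gamma (1 - (t:ℂ)*I) * ((t:ℂ)*I*Complex.Gamma ((t:ℂ)*I)) =
      (t:ℂ)*I*(Complex.Gamma ((t:ℂ)*I)*Complex.Gamma (1-(t:ℂ)*I)) from by ring, h3, hsin]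
    have hI : (Complex.I : ℂ) ≠ 0 := Complex.I_ne_zero
    have hs : ((Real.sinh (Real.pi * t) : ℝ) : ℂ) ≠ 0 := by
      exact_mod_cast hsinh_pos.ne'
    push_cast
    rw [mul_div_assoc' ((t:ℂ)*I), show (t:ℂ)*I*(Real.pi:ℂ) = (Real.pi:ℂ)*(t:ℂ)*I from by ring,
      mul_div_mul_right _ _ hI]
  exact_mod_cast this

lemma norm_Gamma_eq (t : ℝ) : ‖Complex.Gamma (1 - (t:ℂ) * I)‖ = ‖Complex.Gamma (1 - ((|t|:ℝ):ℂ) * I)‖ := by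
  rcases abs_choice t with h | h
  · rw [h]
  · rw [h]
    have : (1 : ℂ) - ((-t : ℝ):ℂ) * I = (starRingEnd ℂ) (1 - (t:ℂ)*I) := by
      simp [Complex.ext_iff]
    rw [this, Complex.Gamma_conj]
    simp

lemma G_bound (t : ℝ) : ‖Complex.Gamma (1 - (t:ℂ) * I)‖ ≤
    Real.exp Real.pi * Real.sqrt (1 + |t|) * Real.exp (-(Real.pi * (1 + |t|)) / 2) := by
  rw [norm_Gamma_eq]
  set s := |t| with hs
  have hs0 : 0 ≤ s := abs_nonneg t
  set R := Real.exp Real.pi * Real.sqrt (1 + s) * Real.exp (-(Real.pi * (1 + s)) / 2) with hR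
  have hRpos : 0 < R := by positivity
  have hsq : R ^ 2 = Real.exp Real.pi * (1 + s) * Real.exp (-(Real.pi * s)) := by
    rw [hR, mul_pow, mul_pow, Real.sq_sqrt (by positivity)]
    have e2 : ∀ a : ℝ, Real.exp a ^ 2 = Real.exp (a + a) := fun a => by
      rw [Real.exp_add]; ring
    rw [e2, e2]
    have h3 : Real.exp (Real.pi + Real.pi) *
        Real.exp (-(Real.pi * (1 + s)) / 2 + -(Real.pi * (1 + s)) / 2) =
        Real.exp Real.pi * Real.exp (-(Real.pi * s)) := by
      rw [← Real.exp_add, ← Real.exp_add]; ring_nf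
    linear_combination (1 + s) * h3
  rcases eq_or_lt_of_le hs0 with h0 | h0
  · rw [hR, ← h0]
    have h1 : (1 : ℂ) - ((0:ℝ):ℂ) * I = 1 := by simp
    rw [h1, Complex.Gamma_one, norm_one]
    have h2 : Real.sqrt (1 + 0) = 1 := by simp
    rw [h2, mul_one, ← Real.exp_add]
    calc (1:ℝ) = Real.exp 0 := Real.exp_zero.symm
      _ ≤ _ := Real.exp_le_exp.mpr (by linarith [Real.pi_pos])
  · have h1 : ‖Complex.Gamma (1 - (s:ℂ) * I)‖ =
        Real.sqrt (Complex.normSq (Complex.Gamma (1 - (s:ℂ) * I))) := by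
      rw [Complex.norm_def]
    rw [h1, normSq_Gamma s h0]
    calc Real.sqrt (Real.pi * s / Real.sinh (Real.pi * s)) ≤ Real.sqrt (R ^ 2) :=
          Real.sqrt_le_sqrt (by rw [hsq]; exact key_ineq s h0)
      _ = R := Real.sqrt_sq hRpos.le

lemma gam_prod (t : ℝ) : ∀ n : ℕ, ‖Complex.Gamma (1 + (n:ℂ) - (t:ℂ) * I)‖ ≤
    ‖Complex.Gamma (1 - (t:ℂ) * I)‖ * n.factorial * (1 + |t|) ^ n := by
  intro n
  induction n with
  | zero => simp
  | succ n ih =>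
    have hne : 1 + (n:ℂ) - (t:ℂ) * I ≠ 0 := by
      intro h
      have := congrArg Complex.re h
      simp at this
      linarith [Nat.cast_nonneg (α := ℝ) n]
    have hrec : Complex.Gamma (1 + ((n:ℂ)+1) - (t:ℂ) * I) =
        (1 + (n:ℂ) - (t:ℂ) * I) * Complex.Gamma (1 + (n:ℂ) - (t:ℂ) * I) := by
      rw [show (1 + ((n:ℂ)+1) - (t:ℂ) * I) = (1 + (n:ℂ) - (t:ℂ) * I) + 1 from by ring]
      exact Complex.Gamma_add_one _ hne
    have hnorm : ‖(1 + (n:ℂ) - (t:ℂ) * I)‖ ≤ ((n:ℝ) + 1) * (1 + |t|) := by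
      have h1 : ‖(1 + (n:ℂ) : ℂ)‖ = (n:ℝ) + 1 := by
        rw [show (1 + (n:ℂ)) = (((n + 1 : ℕ)):ℂ) from by push_cast; ring,
          Complex.norm_natCast]
        push_cast; ring
      have h2 : ‖(t:ℂ) * I‖ = |t| := by
        rw [norm_mul, Complex.norm_I, mul_one, Complex.norm_real, Real.norm_eq_abs]
      calc ‖(1 + (n:ℂ) - (t:ℂ) * I)‖ ≤ ‖(1 + (n:ℂ) : ℂ)‖ + ‖(t:ℂ) * I‖ := norm_sub_le _ _
        _ = (n:ℝ) + 1 + |t| := by rw [h1, h2]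
        _ ≤ _ := by nlinarith [abs_nonneg t, Nat.cast_nonneg (α := ℝ) n]
    push_cast
    rw [hrec, norm_mul]
    calc ‖(1 + (n:ℂ) - (t:ℂ) * I)‖ * ‖Complex.Gamma (1 + (n:ℂ) - (t:ℂ) * I)‖
        ≤ ((n + 1) * (1 + |t|)) * (‖Complex.Gamma (1 - (t:ℂ) * I)‖ * n.factorial * (1 + |t|) ^ n) := by
          apply mul_le_mul hnorm ih (norm_nonneg _) (by positivity)
      _ = ‖Complex.Gamma (1 - (t:ℂ) * I)‖ * (n + 1).factorial * (1 + |t|) ^ (n + 1) := by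
          rw [Nat.factorial_succ]; push_cast; ring

theorem stmt0 :
    ∃ C > (0 : ℝ), ∀ (k : ℕ), 2 ≤ k → ∀ (t : ℝ), ∀ (x : ℝ),
      Real.exp 1 * (1 + |t|) / k < x → ∀ ε : ℝ, ε = 1 ∨ ε = -1 →
      ‖Ipm ε t k x‖ ≤ C * Real.exp (-Real.pi * (1 + |t|) / 2) *
        Real.sqrt (x / (1 + |t|)) * (Real.exp 1 * (1 + |t|) / (x * k)) ^ k := by
  refine ⟨Real.exp Real.pi, Real.exp_pos _, ?_⟩
  intro k hk t x hx ε hε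
  set T : ℝ := 1 + |t| with hTdef
  have hT1 : (1:ℝ) ≤ T := le_add_of_nonneg_right (abs_nonneg t)
  have hT0 : (0:ℝ) < T := lt_of_lt_of_le one_pos hT1
  have hk0 : (0:ℝ) < (k:ℝ) := by exact_mod_cast Nat.pos_of_ne_zero (by omega)
  have hx0 : (0:ℝ) < x := lt_trans (by positivity) hx
  set G : ℝ := ‖Complex.Gamma (1 - (t:ℂ) * I)‖ with hGdef
  have hG0 : 0 ≤ G := norm_nonneg _
  -- norm of each summand
  set f : ℕ → ℂ := fun j => Complex.Gamma ((k : ℂ) + (j : ℂ) - (t : ℂ) * Complex.I) /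
      (Complex.Gamma (2 * (k : ℂ) + (j : ℂ)) * (Nat.factorial j : ℂ)) *
      (-(eC (-(ε : ℂ) / 4)) / (x : ℂ)) ^ j with hfdef
  set c : ℕ → ℝ := fun j => (G * T ^ (k-1) / (k:ℝ)^k) * ((T/x) ^ j / (j.factorial : ℝ)) with hcdef
  have hterm : ∀ j : ℕ, ‖f j‖ ≤ c j := by
    intro j
    -- Gamma(2k+j) = (2k+j-1)!
    have hG2 : Complex.Gamma (2 * (k:ℂ) + (j:ℂ)) = (((2*k+j-1).factorial : ℕ) : ℂ) := by
      rw [show 2 * (k:ℂ) + (j:ℂ) = ((2*k+j-1 : ℕ) : ℂ) + 1 by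
        have h2 : ((2*k+j-1 : ℕ) : ℂ) = ((2*k+j : ℕ) : ℂ) - 1 := by
          have : (2*k+j-1) + 1 = 2*k+j := by omega
          rw [← this]; push_cast; ring
        rw [h2]; push_cast; ring]
      rw [Complex.Gamma_nat_eq_factorial]
    -- Gamma(k+j-it) bound
    have hG1 : ‖Complex.Gamma ((k:ℂ) + (j:ℂ) - (t:ℂ) * I)‖ ≤
        G * ((k+j-1).factorial : ℝ) * T ^ (k+j-1) := by
      have harg : (k:ℂ) + (j:ℂ) = 1 + ((k+j-1 : ℕ) : ℂ) := by
        have : (k+j-1) + 1 = k+j := by omega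
        have h2 : ((k+j-1 : ℕ) : ℂ) = ((k+j : ℕ) : ℂ) - 1 := by
          rw [← this]; push_cast; ring
        rw [h2]; push_cast; ring
      rw [harg]
      exact gam_prod t (k+j-1)
    -- norm of the power
    have hw : ‖(-(eC (-(ε:ℂ) / 4)) / (x:ℂ)) ^ j‖ = (1/x) ^ j := by
      rw [norm_pow, norm_div, norm_neg]
      have : -(ε:ℂ)/4 = ((-ε/4 : ℝ) : ℂ) := by push_cast; ring
      rw [this, norm_eC_real, Complex.norm_real, Real.norm_eq_abs, abs_of_pos hx0]
    have hnf : ‖f j‖ = ‖Complex.Gamma ((k:ℂ) + (j:ℂ) - (t:ℂ) * I)‖ /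
        (((2*k+j-1).factorial : ℝ) * (j.factorial : ℝ)) * (1/x) ^ j := by
      simp only [hfdef]
      rw [norm_mul, norm_div, hw, hG2, norm_mul]
      norm_num [Complex.norm_natCast]
    -- factorial inequality
    have hfact : (((k+j-1).factorial : ℕ) : ℝ) * (k:ℝ)^k ≤ (((2*k+j-1).factorial : ℕ) : ℝ) := by
      have hnat : (k+j-1).factorial * k^k ≤ (2*k+j-1).factorial := by
        calc (k+j-1).factorial * k^k ≤ (k+j-1).factorial * ((k+j-1)+1)^k :=
              Nat.mul_le_mul_left _ (Nat.pow_le_pow_left (by omega) k)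
          _ ≤ ((k+j-1) + k).factorial := Nat.factorial_mul_pow_le_factorial
          _ = (2*k+j-1).factorial := by congr 1; omega
      exact_mod_cast hnat
    have hTsplit : T ^ (k+j-1) = T ^ (k-1) * T ^ j := by
      rw [← pow_add]; congr 1; omega
    rw [hnf, hcdef]
    simp only []
    have hQ0 : (0:ℝ) < ((2*k+j-1).factorial : ℝ) := by positivity
    have hj0 : (0:ℝ) < (j.factorial : ℝ) := by positivity
    calc ‖Complex.Gamma ((k:ℂ) + (j:ℂ) - (t:ℂ) * I)‖ /
        (((2*k+j-1).factorial : ℝ) * (j.factorial : ℝ)) * (1/x) ^ j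
        ≤ (G * ((k+j-1).factorial : ℝ) * T ^ (k+j-1)) /
          (((2*k+j-1).factorial : ℝ) * (j.factorial : ℝ)) * (1/x) ^ j := by
          gcongr
      _ = (((k+j-1).factorial : ℝ) / ((2*k+j-1).factorial : ℝ)) *
          (G * T^(k-1) * (T^j / (j.factorial : ℝ)) * (1/x)^j) := by
          rw [hTsplit]; ring
      _ ≤ (1 / (k:ℝ)^k) * (G * T^(k-1) * (T^j / (j.factorial : ℝ)) * (1/x)^j) := by
          have hdiv : (((k+j-1).factorial : ℕ) : ℝ) / (((2*k+j-1).factorial : ℕ) : ℝ)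
              ≤ 1 / (k:ℝ)^k := by
            rw [div_le_div_iff₀ hQ0 (by positivity)]
            linarith [hfact]
          have hQnn : (0:ℝ) ≤ G * T^(k-1) * (T^j / (j.factorial : ℝ)) * (1/x)^j := by
            have : (0:ℝ) ≤ G := hG0
            positivity
          exact mul_le_mul_of_nonneg_right hdiv hQnn
      _ = (G * T ^ (k-1) / (k:ℝ)^k) * ((T/x) ^ j / (j.factorial : ℝ)) := by
          rw [div_pow, div_pow, one_pow]; ring
  -- summability
  have hsum_base : Summable (fun j : ℕ => (T/x) ^ j / (j.factorial : ℝ)) :=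
    Real.summable_pow_div_factorial (T/x)
  have hsum_c : Summable c := by
    rw [hcdef]; exact hsum_base.mul_left _
  have hsum_nf : Summable (fun j => ‖f j‖) :=
    Summable.of_nonneg_of_le (fun _ => norm_nonneg _) hterm hsum_c
  have htsum : ‖∑' j, f j‖ ≤ (G * T ^ (k-1) / (k:ℝ)^k) * Real.exp (T/x) := by
    calc ‖∑' j, f j‖ ≤ ∑' j, ‖f j‖ := norm_tsum_le_tsum_norm hsum_nf
      _ ≤ ∑' j, c j := Summable.tsum_le_tsum hterm hsum_nf hsum_c
      _ = (G * T ^ (k-1) / (k:ℝ)^k) * Real.exp (T/x) := by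
          rw [hcdef, tsum_mul_left, real_exp_tsum]
  -- norm of prefactors
  have hpre1 : ‖eC ((ε : ℂ) * ((1 : ℂ) / 2 - (k : ℂ)) / 4)‖ = 1 := by
    have : (ε : ℂ) * ((1 : ℂ) / 2 - (k : ℂ)) / 4 = ((ε * (1/2 - (k:ℝ)) / 4 : ℝ) : ℂ) := by
      push_cast; ring
    rw [this, norm_eC_real]
  have hpre2 : ‖(x : ℂ) ^ ((1 : ℂ) / 2 - (k : ℂ))‖ = x ^ ((1:ℝ)/2 - (k:ℝ)) := by
    rw [Complex.norm_cpow_eq_rpow_re_of_pos hx0]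
    congr 1
    simp
  have hnorm_Ipm : ‖Ipm ε t k x‖ ≤ x ^ ((1:ℝ)/2 - (k:ℝ)) *
      ((G * T ^ (k-1) / (k:ℝ)^k) * Real.exp (T/x)) := by
    rw [Ipm, norm_mul, norm_mul, hpre1, hpre2, one_mul]
    exact mul_le_mul_of_nonneg_left htsum (by positivity)
  refine hnorm_Ipm.trans ?_
  -- bound exp(T/x)
  have hTx : T / x ≤ (k:ℝ) := by
    rw [div_le_iff₀ hx0]
    have h1 : Real.exp 1 * T < x * k := by
      rw [div_lt_iff₀ hk0] at hx
      linarith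
    nlinarith [Real.exp_one_gt_d9, hT0]
  have hexp : Real.exp (T/x) ≤ Real.exp 1 ^ k := by
    rw [← Real.exp_nat_mul, mul_one]
    exact Real.exp_le_exp.mpr hTx
  -- bound G
  have hGb : G ≤ Real.exp Real.pi * Real.sqrt T * Real.exp (-Real.pi * T / 2) := by
    have := G_bound t
    rw [show -Real.pi * T / 2 = -(Real.pi * T) / 2 by ring]
    exact this
  -- final computation
  set u : ℝ := Real.sqrt T with hudef
  have hu0 : 0 < u := Real.sqrt_pos.mpr hT0
  have hTT : u * u = T := Real.mul_self_sqrt hT0.le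
  obtain ⟨m, rfl⟩ : ∃ m, k = m + 2 := ⟨k - 2, by omega⟩
  have hstep : x ^ ((1:ℝ)/2 - ((m+2:ℕ):ℝ)) * ((G * T ^ ((m+2)-1) / ((m+2:ℕ):ℝ)^(m+2)) * Real.exp (T/x))
      ≤ x ^ ((1:ℝ)/2 - ((m+2:ℕ):ℝ)) *
        (((Real.exp Real.pi * u * Real.exp (-Real.pi * T / 2)) * T ^ ((m+2)-1) / ((m+2:ℕ):ℝ)^(m+2))
          * Real.exp 1 ^ (m+2)) := by
    gcongr
  refine hstep.trans (le_of_eq ?_)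
  have hrx : x ^ ((1:ℝ)/2 - ((m+2:ℕ):ℝ)) = Real.sqrt x / x ^ (m+2) := by
    rw [Real.rpow_sub hx0, Real.rpow_natCast, ← Real.sqrt_eq_rpow]
  have hsq : Real.sqrt (x / T) = Real.sqrt x / u := by
    rw [hudef, Real.sqrt_div hx0.le]
  rw [hrx, hsq]
  have hxne : x ≠ 0 := hx0.ne'
  have hune : u ≠ 0 := hu0.ne'
  have hKne : ((m+2:ℕ):ℝ) ≠ 0 := hk0.ne'
  rw [show m + 2 - 1 = m + 1 from rfl]
  generalize Real.exp (-Real.pi * T / 2) = F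
  generalize hKK : ((m+2:ℕ):ℝ) = K at hKne ⊢
  generalize Real.exp 1 = E1
  generalize Real.exp Real.pi = EP
  rw [← hTT]
  field_simp
  have h1 : ∀ n : ℕ, x ^ n * x⁻¹ ^ n = 1 := fun n => by rw [← mul_pow, mul_inv_cancel₀ hxne, one_pow]
  have h2 : ∀ n : ℕ, K ^ n * K⁻¹ ^ n = 1 := fun n => by rw [← mul_pow, mul_inv_cancel₀ hKne, one_pow]
  linear_combination (-(EP * u ^ 4 * u ^ (m * 2) * F * E1 ^ 2 * E1 ^ m)) * (x ^ m * x⁻¹ ^ m * K ^ 2 * K⁻¹ ^ 2 * K ^ m * K⁻¹ ^ m) * h1 2 - (EP * u ^ 4 * u ^ (m * 2) * F * E1 ^ 2 * E1 ^ m) * (K ^ 2 * K⁻¹ ^ 2 * K ^ m * K⁻¹ ^ m) * h1 m - (EP * u ^ 4 * u ^ (m * 2) * F * E1 ^ 2 * E1 ^ m) * (K ^ m * K⁻¹ ^ m) * h2 2 - (EP * u ^ 4 * u ^ (m * 2) * F * E1 ^ 2 * E1 ^ m) * h2 m
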